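/- Let {P^{Q,μ}} be a family of row-stochastic kernels on a finite set 𝒳, indexed by Q : 𝒳 × 𝒜 → ℝ and probability distributions μ on 𝒳, satisfying Σ_{x'} |P^{Q₁,μ₁}(x,x') − P^{Q₂,μ₂}(x,x')| ≤ L_p ‖μ₁−μ₂‖_TV + L_Q ‖Q₁−Q₂‖_∞ for all x, with 0 < L_p < 1 and L_Q > 0. Suppose μ₁ and μ₂ are probability distributions with μ₁ = μ₁ P^{Q₁,μ₁} and μ₂ = μ₂ P^{Q₂,μ₂}, and P^{Q₂,μ₂} satisfies the Doeblin condition P^{Q₂,μ₂}(x,x') ≥ β ν(x') for a probability distribution ν and β ∈ ((1+L_p)/2, 1). Then ‖μ₁ − μ₂‖_TV ≤ (L_Q/(2β − 1 − L_p)) ‖Q₁ − Q₂‖_∞. -/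
import Mathlib


open Finset

/-- A probability distribution on a finite set. -/
def IsProb {𝒳 : Type*} [Fintype 𝒳] (μ : 𝒳 → ℝ) : Prop :=
  (∀ x, 0 ≤ μ x) ∧ ∑ x, μ x = 1

/-- Total variation norm: `‖m‖_TV = sup_{A ⊆ 𝒳} |Σ_{x∈A} m(x)|`. -/
noncomputable def tvNorm {𝒳 : Type*} [Fintype 𝒳] (m : 𝒳 → ℝ) : ℝ :=
  ⨆ A : Finset 𝒳, |∑ x ∈ A, m x|

/-- Sup norm `‖Q‖_∞ = max_{(x,a)} |Q(x,a)|` for `Q : 𝒳 × 𝒜 → ℝ`. -/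
noncomputable def supNorm {𝒳 𝒜 : Type*} [Fintype 𝒳] [Fintype 𝒜] (Q : 𝒳 → 𝒜 → ℝ) : ℝ :=
  ⨆ q : 𝒳 × 𝒜, |Q q.1 q.2|

/-- A row-stochastic kernel on a finite set. -/
def IsKernel {𝒳 : Type*} [Fintype 𝒳] (P : 𝒳 → 𝒳 → ℝ) : Prop :=
  (∀ x x', 0 ≤ P x x') ∧ ∀ x, ∑ x', P x x' = 1


lemma tvNorm_bddAbove {𝒳 : Type*} [Fintype 𝒳] (m : 𝒳 → ℝ) :
    BddAbove (Set.range fun A : Finset 𝒳 => |∑ x ∈ A, m x|) :=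
  Set.Finite.bddAbove (Set.finite_range _)

lemma abs_sum_le_tvNorm {𝒳 : Type*} [Fintype 𝒳] (m : 𝒳 → ℝ) (A : Finset 𝒳) :
    |∑ x ∈ A, m x| ≤ tvNorm m :=
  le_ciSup (tvNorm_bddAbove m) A

lemma half_lemma {𝒳 : Type*} [Fintype 𝒳] (v : 𝒳 → ℝ) (hv : ∑ x, v x = 0) (A : Finset 𝒳) :
    |∑ x ∈ A, v x| ≤ (∑ x, |v x|) / 2 := by
  classical
  have h1 : ∑ x ∈ A, v x + ∑ x ∈ Aᶜ, v x = 0 := by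
    rw [Finset.sum_add_sum_compl]; exact hv
  have h2 : |∑ x ∈ Aᶜ, v x| = |∑ x ∈ A, v x| := by
    rw [show (∑ x ∈ Aᶜ, v x) = -∑ x ∈ A, v x by linarith, abs_neg]
  have h3 : |∑ x ∈ A, v x| ≤ ∑ x ∈ A, |v x| := Finset.abs_sum_le_sum_abs _ _
  have h4 : |∑ x ∈ Aᶜ, v x| ≤ ∑ x ∈ Aᶜ, |v x| := Finset.abs_sum_le_sum_abs _ _
  have h5 : ∑ x ∈ A, |v x| + ∑ x ∈ Aᶜ, |v x| = ∑ x, |v x| := Finset.sum_add_sum_compl A _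
  linarith

lemma tvNorm_nonneg {𝒳 : Type*} [Fintype 𝒳] (m : 𝒳 → ℝ) : 0 ≤ tvNorm m := by
  have := abs_sum_le_tvNorm m ∅
  simpa using this

lemma tvNorm_neg {𝒳 : Type*} [Fintype 𝒳] (m : 𝒳 → ℝ) :
    tvNorm (fun x => -m x) = tvNorm m := by
  unfold tvNorm
  congr 1
  funext A
  rw [Finset.sum_neg_distrib, abs_neg]

lemma weighted_sum_le_aux {𝒳 : Type*} [Fintype 𝒳] (m g : 𝒳 → ℝ) (c : ℝ)
    (hg0 : ∀ x, 0 ≤ g x) (hgc : ∀ x, g x ≤ c) (hc : 0 ≤ c) :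
    ∑ x, m x * g x ≤ c * tvNorm m := by
  classical
  have h1 : ∀ x, m x * g x ≤ max (m x) 0 * c := by
    intro x
    rcases le_or_gt 0 (m x) with h | h
    · rw [max_eq_left h]
      exact mul_le_mul_of_nonneg_left (hgc x) h
    · rw [max_eq_right h.le, zero_mul]
      exact mul_nonpos_of_nonpos_of_nonneg h.le (hg0 x)
  have h2 : ∑ x, max (m x) 0 = ∑ x ∈ Finset.univ.filter (fun x => 0 ≤ m x), m x := by
    rw [Finset.sum_filter]
    apply Finset.sum_congr rfl
    intro x _
    split_ifs with h
    · exact max_eq_left h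
    · exact max_eq_right (le_of_not_ge h)
  have h3 : ∑ x ∈ Finset.univ.filter (fun x => 0 ≤ m x), m x ≤ tvNorm m :=
    le_trans (le_abs_self _) (abs_sum_le_tvNorm m _)
  calc ∑ x, m x * g x ≤ ∑ x, max (m x) 0 * c := Finset.sum_le_sum fun x _ => h1 x
    _ = (∑ x, max (m x) 0) * c := by rw [Finset.sum_mul]
    _ ≤ tvNorm m * c := mul_le_mul_of_nonneg_right (h2 ▸ h3) hc
    _ = c * tvNorm m := mul_comm _ _

/-- If `g x ∈ [0, c]` for all `x`, then `|∑ m x * g x| ≤ c * tvNorm m`. -/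
lemma weighted_sum_le {𝒳 : Type*} [Fintype 𝒳] (m g : 𝒳 → ℝ) (c : ℝ)
    (hg0 : ∀ x, 0 ≤ g x) (hgc : ∀ x, g x ≤ c) (hc : 0 ≤ c) :
    |∑ x, m x * g x| ≤ c * tvNorm m := by
  rw [abs_le]
  constructor
  · have := weighted_sum_le_aux (fun x => -m x) g c hg0 hgc hc
    rw [tvNorm_neg] at this
    simp only [neg_mul] at this
    rw [Finset.sum_neg_distrib] at this
    linarith
  · exact weighted_sum_le_aux m g c hg0 hgc hc

/-- Equilibrium distributions of nearby Q-functions are close: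
`‖μ₁ − μ₂‖_TV ≤ (L_Q/(2β − 1 − L_p)) ‖Q₁ − Q₂‖_∞`. -/
theorem equilibrium_lipschitz_in_Q {𝒳 𝒜 : Type*} [Fintype 𝒳] [Fintype 𝒜]
    (P : (𝒳 → 𝒜 → ℝ) → (𝒳 → ℝ) → 𝒳 → 𝒳 → ℝ)
    (Lp LQ : ℝ) (hLp : 0 < Lp ∧ Lp < 1) (hLQ : 0 < LQ)
    (hker : ∀ Q μ, IsProb μ → IsKernel (P Q μ))
    (hlip : ∀ Q₁ Q₂ μ₁ μ₂, IsProb μ₁ → IsProb μ₂ → ∀ x,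
      ∑ x', |P Q₁ μ₁ x x' - P Q₂ μ₂ x x'| ≤
        Lp * tvNorm (fun y => μ₁ y - μ₂ y) + LQ * supNorm (fun x a => Q₁ x a - Q₂ x a))
    (Q₁ Q₂ : 𝒳 → 𝒜 → ℝ)
    (μ₁ μ₂ : 𝒳 → ℝ) (hμ₁ : IsProb μ₁) (hμ₂ : IsProb μ₂)
    (hfix₁ : ∀ x', (∑ x, μ₁ x * P Q₁ μ₁ x x') = μ₁ x')
    (hfix₂ : ∀ x', (∑ x, μ₂ x * P Q₂ μ₂ x x') = μ₂ x')
    (ν : 𝒳 → ℝ) (hν : IsProb ν)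
    (β : ℝ) (hβ : (1 + Lp) / 2 < β ∧ β < 1)
    (hDoe : ∀ x x', β * ν x' ≤ P Q₂ μ₂ x x') :
    tvNorm (fun x => μ₁ x - μ₂ x) ≤
      LQ / (2 * β - 1 - Lp) * supNorm (fun x a => Q₁ x a - Q₂ x a) := by
  classical
  obtain ⟨hLp0, hLp1⟩ := hLp
  obtain ⟨hβ1, hβ2⟩ := hβ
  set m : 𝒳 → ℝ := fun x => μ₁ x - μ₂ x with hm
  set Δ : ℝ := tvNorm m with hΔ
  set s : ℝ := supNorm (fun x a => Q₁ x a - Q₂ x a) with hs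
  have hc : 0 < 2 * β - 1 - Lp := by linarith
  have hβ0 : (0:ℝ) ≤ 1 - β := by linarith
  have hmsum : ∑ x, m x = 0 := by
    simp only [hm, Finset.sum_sub_distrib, hμ₁.2, hμ₂.2, sub_self]
  have hker₁ := hker Q₁ μ₁ hμ₁
  have hker₂ := hker Q₂ μ₂ hμ₂
  have key : ∀ A : Finset 𝒳, |∑ x' ∈ A, m x'| ≤ (1 - β) * Δ + (Lp * Δ + LQ * s) / 2 := by
    intro A
    set K : 𝒳 → ℝ := fun x => ∑ x' ∈ A, P Q₂ μ₂ x x' with hK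
    set K₁ : 𝒳 → ℝ := fun x => ∑ x' ∈ A, P Q₁ μ₁ x x' with hK₁
    have hdec : ∑ x' ∈ A, m x' = (∑ x, m x * K x) + (∑ x, μ₁ x * (K₁ x - K x)) := by
      have h1 : ∀ x' ∈ A, m x' = ∑ x, (μ₁ x * P Q₁ μ₁ x x' - μ₂ x * P Q₂ μ₂ x x') := by
        intro x' _
        rw [Finset.sum_sub_distrib, hfix₁, hfix₂]
      rw [Finset.sum_congr rfl h1, Finset.sum_comm, ← Finset.sum_add_distrib]
      apply Finset.sum_congr rfl
      intro x _
      simp only [hK, hK₁, hm, Finset.sum_sub_distrib, ← Finset.mul_sum]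
      ring
    -- Bound the first term via the Doeblin condition
    set νA : ℝ := ∑ x' ∈ A, ν x' with hνA
    have hνA1 : νA + ∑ x' ∈ Aᶜ, ν x' = 1 := by
      rw [hνA, Finset.sum_add_sum_compl]; exact hν.2
    have hS1 : |∑ x, m x * K x| ≤ (1 - β) * Δ := by
      have heq : ∑ x, m x * K x = ∑ x, m x * (K x - β * νA) := by
        simp only [mul_sub, Finset.sum_sub_distrib]
        rw [← Finset.sum_mul, hmsum]
        ring
      rw [heq]
      apply weighted_sum_le m _ (1 - β) _ _ hβ0
      · intro x
        have : β * νA ≤ K x := by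
          rw [hνA, hK, Finset.mul_sum]
          exact Finset.sum_le_sum fun x' _ => hDoe x x'
        linarith
      · intro x
        have h1 : K x + ∑ x' ∈ Aᶜ, P Q₂ μ₂ x x' = 1 := by
          rw [hK, Finset.sum_add_sum_compl]; exact hker₂.2 x
        have h2 : β * ∑ x' ∈ Aᶜ, ν x' ≤ ∑ x' ∈ Aᶜ, P Q₂ μ₂ x x' := by
          rw [Finset.mul_sum]
          exact Finset.sum_le_sum fun x' _ => hDoe x x'
        nlinarith
    -- Bound the second term via the Lipschitz condition
    have hS2 : |∑ x, μ₁ x * (K₁ x - K x)| ≤ (Lp * Δ + LQ * s) / 2 := by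
      have hrow : ∀ x, |K₁ x - K x| ≤ (Lp * Δ + LQ * s) / 2 := by
        intro x
        have hz : ∑ x', (P Q₁ μ₁ x x' - P Q₂ μ₂ x x') = 0 := by
          rw [Finset.sum_sub_distrib, hker₁.2 x, hker₂.2 x, sub_self]
        have := half_lemma (fun x' => P Q₁ μ₁ x x' - P Q₂ μ₂ x x') hz A
        have hlipx := hlip Q₁ Q₂ μ₁ μ₂ hμ₁ hμ₂ x
        simp only [hK₁, hK, ← Finset.sum_sub_distrib] at *
        calc |∑ x' ∈ A, (P Q₁ μ₁ x x' - P Q₂ μ₂ x x')|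
            ≤ (∑ x', |P Q₁ μ₁ x x' - P Q₂ μ₂ x x'|) / 2 := this
          _ ≤ (Lp * Δ + LQ * s) / 2 := by
              apply div_le_div_of_nonneg_right ?_ (by norm_num) |>.trans_eq rfl
              exact hlipx
      calc |∑ x, μ₁ x * (K₁ x - K x)| ≤ ∑ x, |μ₁ x * (K₁ x - K x)| :=
            Finset.abs_sum_le_sum_abs _ _
        _ = ∑ x, μ₁ x * |K₁ x - K x| := by
            apply Finset.sum_congr rfl
            intro x _
            rw [abs_mul, abs_of_nonneg (hμ₁.1 x)]
        _ ≤ ∑ x, μ₁ x * ((Lp * Δ + LQ * s) / 2) :=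
            Finset.sum_le_sum fun x _ =>
              mul_le_mul_of_nonneg_left (hrow x) (hμ₁.1 x)
        _ = (Lp * Δ + LQ * s) / 2 := by rw [← Finset.sum_mul, hμ₁.2, one_mul]
    calc |∑ x' ∈ A, m x'| = |(∑ x, m x * K x) + (∑ x, μ₁ x * (K₁ x - K x))| := by rw [hdec]
      _ ≤ |∑ x, m x * K x| + |∑ x, μ₁ x * (K₁ x - K x)| := abs_add_le _ _
      _ ≤ (1 - β) * Δ + (Lp * Δ + LQ * s) / 2 := add_le_add hS1 hS2
  have hΔle : Δ ≤ (1 - β) * Δ + (Lp * Δ + LQ * s) / 2 := ciSup_le key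
  have hfinal : Δ ≤ LQ / (2 * β - 1 - Lp) * s := by
    have hΔ0 : 0 ≤ Δ := tvNorm_nonneg m
    rw [div_mul_eq_mul_div, le_div_iff₀ hc]
    nlinarith [hΔle, hΔ0]
  exact hfinal
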